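/- Let (H,α) be a monoidal Hom-Hopf algebra over a commutative ring k and let (M,μ) be a left-covariant (H,α)-Hom-bimodule with left coaction ρ(m)=m₍₋₁₎⊗m₍₀₎, and set P_L(m)=S(m₍₋₁₎)·m₍₀₎. Then for all h∈H and m∈M: P_L(h·m)=ε(h)μ(P_L(m)) and P_L(m·h)=(S(h₁)·μ⁻¹(P_L(m)))·α(h₂) (i.e. P_L(m·h) equals the right adjoint Hom-action of h on P_L(m)). -/

import Mathlib

open TensorProduct

noncomputable def tmul2 {k A B C D E F : Type*} [CommRing k]
    [AddCommGroup A] [AddCommGroup B] [AddCommGroup C] [AddCommGroup D]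
    [AddCommGroup E] [AddCommGroup F]
    [Module k A] [Module k B] [Module k C] [Module k D] [Module k E] [Module k F]
    (f : A →ₗ[k] C →ₗ[k] E) (g : B →ₗ[k] D →ₗ[k] F) :
    (A ⊗[k] B) →ₗ[k] (C ⊗[k] D) →ₗ[k] (E ⊗[k] F) :=
  TensorProduct.curry
    ((TensorProduct.map (TensorProduct.lift f) (TensorProduct.lift g)) ∘ₗ
      (TensorProduct.tensorTensorTensorComm k A B C D).toLinearMap)

/-- A monoidal Hom-Hopf algebra over a commutative ring `k`. -/
structure MonHomHopf (k H : Type*) [CommRing k] [AddCommGroup H] [Module k H] where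
  α : H ≃ₗ[k] H
  mul : H →ₗ[k] H →ₗ[k] H
  one : H
  comul : H →ₗ[k] H ⊗[k] H
  counit : H →ₗ[k] k
  S : H →ₗ[k] H
  alpha_mul : ∀ g h, α (mul g h) = mul (α g) (α h)
  alpha_one : α one = one
  hom_assoc : ∀ g h l, mul (α g) (mul h l) = mul (mul g h) (α l)
  mul_one' : ∀ h, mul h one = α h
  one_mul' : ∀ h, mul one h = α h
  comul_alpha : ∀ h, comul (α h)
    = TensorProduct.map α.toLinearMap α.toLinearMap (comul h)
  counit_alpha : ∀ h, counit (α h) = counit h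
  hom_coassoc : ∀ h,
    (TensorProduct.assoc k H H H) ((TensorProduct.map comul α.symm.toLinearMap) (comul h))
      = (TensorProduct.map α.symm.toLinearMap comul) (comul h)
  counit_comul_left : ∀ h,
    (TensorProduct.lid k H) ((TensorProduct.map counit LinearMap.id) (comul h)) = α.symm h
  counit_comul_right : ∀ h,
    (TensorProduct.rid k H) ((TensorProduct.map LinearMap.id counit) (comul h)) = α.symm h
  comul_mul : ∀ g h, comul (mul g h) = tmul2 mul mul (comul g) (comul h)
  comul_one : comul one = one ⊗ₜ[k] one
  counit_mul : ∀ g h, counit (mul g h) = counit g * counit h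
  counit_one : counit one = 1
  antipode_left : ∀ h,
    (TensorProduct.lift mul) ((TensorProduct.map S LinearMap.id) (comul h)) = counit h • one
  antipode_right : ∀ h,
    (TensorProduct.lift mul) ((TensorProduct.map LinearMap.id S) (comul h)) = counit h • one
  S_alpha : ∀ h, S (α h) = α (S h)

/-- A left-covariant `(H,α)`-Hom-bimodule. -/
structure LeftCovBimod {k H : Type*} [CommRing k] [AddCommGroup H] [Module k H]
    (A : MonHomHopf k H) (M : Type*) [AddCommGroup M] [Module k M] where
  μ : M ≃ₗ[k] M
  lact : H →ₗ[k] M →ₗ[k] M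
  ract : M →ₗ[k] H →ₗ[k] M
  lact_assoc : ∀ g h m, lact (A.α g) (lact h m) = lact (A.mul g h) (μ m)
  lact_one : ∀ m, lact A.one m = μ m
  mu_lact : ∀ h m, μ (lact h m) = lact (A.α h) (μ m)
  ract_assoc : ∀ m g h, ract (μ m) (A.mul g h) = ract (ract m g) (A.α h)
  ract_one : ∀ m, ract m A.one = μ m
  mu_ract : ∀ m h, μ (ract m h) = ract (μ m) (A.α h)
  bimod : ∀ h m g, ract (lact h m) (A.α g) = lact (A.α h) (ract m g)
  rho : M →ₗ[k] H ⊗[k] M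
  rho_coassoc : ∀ m,
    (TensorProduct.map (LinearMap.id : H →ₗ[k] H) rho) (rho m)
      = (TensorProduct.assoc k H H M)
          ((TensorProduct.map
              ((TensorProduct.map A.α.toLinearMap (LinearMap.id : H →ₗ[k] H)) ∘ₗ A.comul)
              μ.symm.toLinearMap) (rho m))
  rho_counit : ∀ m,
    (TensorProduct.lid k M) ((TensorProduct.map A.counit (LinearMap.id : M →ₗ[k] M)) (rho m))
      = μ.symm m
  rho_mu : ∀ m, rho (μ m) = TensorProduct.map A.α.toLinearMap μ.toLinearMap (rho m)
  rho_cov : ∀ h g m,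
    rho (ract (lact h m) (A.α g))
      = tmul2 A.mul lact (A.comul (A.α h)) (tmul2 A.mul ract (rho m) (A.comul g))

/-- The projection `P_L(m) = S(m₍₋₁₎) · m₍₀₎`. -/
noncomputable def LeftCovBimod.PL {k H : Type*} [CommRing k] [AddCommGroup H] [Module k H]
    {A : MonHomHopf k H} {M : Type*} [AddCommGroup M] [Module k M]
    (B : LeftCovBimod A M) : M →ₗ[k] M :=
  (TensorProduct.lift (B.lact ∘ₗ A.S)) ∘ₗ B.rho

/-- The right adjoint Hom-action of `H` on a left-covariant Hom-bimodule:
`x ◁ h = (S(h₁) · μ⁻¹(x)) · α(h₂)`. -/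
noncomputable def LeftCovBimod.adRM {k H : Type*} [CommRing k] [AddCommGroup H] [Module k H]
    {A : MonHomHopf k H} {M : Type*} [AddCommGroup M] [Module k M]
    (B : LeftCovBimod A M) (x : M) : H →ₗ[k] M :=
  (TensorProduct.lift
    ((B.ract.comp ((B.lact.flip (B.μ.symm x)).comp A.S)).compl₂ A.α.toLinearMap)) ∘ₗ A.comul

namespace HomAux

variable {k H : Type*} [CommRing k] [AddCommGroup H] [Module k H] (A : MonHomHopf k H)

lemma ainv_mul (g h : H) : A.α.symm (A.mul g h) = A.mul (A.α.symm g) (A.α.symm h) := by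
  apply A.α.injective
  rw [A.alpha_mul]
  simp

lemma S_ainv (h : H) : A.S (A.α.symm h) = A.α.symm (A.S h) := by
  apply A.α.injective
  rw [← A.S_alpha]
  simp

lemma comp_symm_self : A.α.symm.toLinearMap ∘ₗ A.α.toLinearMap = LinearMap.id := by
  ext x; simp

lemma comp_self_symm : A.α.toLinearMap ∘ₗ A.α.symm.toLinearMap = LinearMap.id := by
  ext x; simp

lemma comul_ainv (h : H) : A.comul (A.α.symm h)
    = TensorProduct.map A.α.symm.toLinearMap A.α.symm.toLinearMap (A.comul h) := by
  have h1 := A.comul_alpha (A.α.symm h)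
  rw [A.α.apply_symm_apply] at h1
  rw [h1, ← LinearMap.comp_apply, ← TensorProduct.map_comp, comp_symm_self,
    TensorProduct.map_id, LinearMap.id_apply]

lemma counit_ainv (h : H) : A.counit (A.α.symm h) = A.counit h := by
  have := A.counit_alpha (A.α.symm h)
  rw [A.α.apply_symm_apply] at this
  exact this.symm

lemma tmul2_apply {M N P Q E F : Type*}
    [AddCommGroup M] [AddCommGroup N] [AddCommGroup P] [AddCommGroup Q]
    [AddCommGroup E] [AddCommGroup F]
    [Module k M] [Module k N] [Module k P] [Module k Q] [Module k E] [Module k F]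
    (f : M →ₗ[k] P →ₗ[k] E) (g : N →ₗ[k] Q →ₗ[k] F) (u : M ⊗[k] N) (v : P ⊗[k] Q) :
    tmul2 f g u v = TensorProduct.map (TensorProduct.lift f) (TensorProduct.lift g)
      ((TensorProduct.tensorTensorTensorComm k M N P Q) (u ⊗ₜ v)) := by
  simp [tmul2]

lemma tmul2_tmul {M N P Q E F : Type*}
    [AddCommGroup M] [AddCommGroup N] [AddCommGroup P] [AddCommGroup Q]
    [AddCommGroup E] [AddCommGroup F]
    [Module k M] [Module k N] [Module k P] [Module k Q] [Module k E] [Module k F]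
    (f : M →ₗ[k] P →ₗ[k] E) (g : N →ₗ[k] Q →ₗ[k] F) (a : M) (b : N) (c : P) (d : Q) :
    tmul2 f g (a ⊗ₜ b) (c ⊗ₜ d) = (f a c) ⊗ₜ[k] (g b d) := by
  simp [tmul2]

end HomAux

namespace HomAux

variable {k H : Type*} [CommRing k] [AddCommGroup H] [Module k H] (A : MonHomHopf k H)

/-- multiplication as a map on the tensor square -/
noncomputable def mmA : H ⊗[k] H →ₗ[k] H := TensorProduct.lift A.mul

/-- `ν(a ⊗ b) = S(b) S(a)` -/
noncomputable def nuA : H ⊗[k] H →ₗ[k] H :=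
  TensorProduct.lift ((A.mul.flip ∘ₗ A.S).compl₂ A.S)

/-- `GL(a ⊗ b) = S(a) b` -/
noncomputable def GLA : H ⊗[k] H →ₗ[k] H :=
  TensorProduct.lift A.mul ∘ₗ TensorProduct.map A.S LinearMap.id

/-- `GR(a ⊗ b) = a S(b)` -/
noncomputable def GRA : H ⊗[k] H →ₗ[k] H :=
  TensorProduct.lift A.mul ∘ₗ TensorProduct.map LinearMap.id A.S

/-- the convolution unit: `(x ⊗ y) ↦ (ε x * ε y) • 1` -/
noncomputable def uemA : H ⊗[k] H →ₗ[k] H :=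
  LinearMap.toSpanSingleton k H A.one ∘ₗ
    TensorProduct.lift ((LinearMap.mul k k ∘ₗ A.counit).compl₂ A.counit)

lemma uemA_tmul (x y : H) : uemA A (x ⊗ₜ y) = (A.counit x * A.counit y) • A.one := by
  simp [uemA]

/-- convolution product on maps `H ⊗ H → H` -/
noncomputable def convA (f g : H ⊗[k] H →ₗ[k] H) : H ⊗[k] H →ₗ[k] H :=
  TensorProduct.lift ((A.mul ∘ₗ f).compl₂ g) ∘ₗ
    ((TensorProduct.tensorTensorTensorComm k H H H H).toLinearMap ∘ₗ
      TensorProduct.map A.comul A.comul)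

lemma convA_tmul (f g : H ⊗[k] H →ₗ[k] H) (x y : H) :
    convA A f g (x ⊗ₜ y)
      = (TensorProduct.lift ((A.mul ∘ₗ f).compl₂ g) ∘ₗ
          (TensorProduct.tensorTensorTensorComm k H H H H).toLinearMap)
            (A.comul x ⊗ₜ A.comul y) := by
  simp [convA]

/-- right counit contraction `a ⊗ b ↦ ε(b) • a` -/
noncomputable def rctr : H ⊗[k] H →ₗ[k] H :=
  (TensorProduct.rid k H).toLinearMap ∘ₗ TensorProduct.map LinearMap.id A.counit

/-- left counit contraction `a ⊗ b ↦ ε(a) • b` -/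
noncomputable def lctr : H ⊗[k] H →ₗ[k] H :=
  (TensorProduct.lid k H).toLinearMap ∘ₗ TensorProduct.map A.counit LinearMap.id

lemma rctr_comul (x : H) : rctr A (A.comul x) = A.α.symm x := by
  simpa [rctr] using A.counit_comul_right x

lemma lctr_comul (x : H) : lctr A (A.comul x) = A.α.symm x := by
  simpa [lctr] using A.counit_comul_left x

/-- L1 : `f * uem = f` for α-equivariant `f` -/
lemma conv_uem (f : H ⊗[k] H →ₗ[k] H)
    (hf : ∀ a b, f (A.α a ⊗ₜ[k] A.α b) = A.α (f (a ⊗ₜ b))) :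
    convA A f (uemA A) = f := by
  refine TensorProduct.ext' fun x y => ?_
  rw [convA_tmul]
  have E : TensorProduct.lift ((A.mul ∘ₗ f).compl₂ (uemA A)) ∘ₗ
        (TensorProduct.tensorTensorTensorComm k H H H H).toLinearMap
      = A.α.toLinearMap ∘ₗ f ∘ₗ TensorProduct.map (rctr A) (rctr A) := by
    ext a b c d
    simp [uemA, rctr, A.mul_one', tmul_smul, smul_tmul', mul_smul]
    simp [← smul_tmul', smul_smul, mul_comm]
  rw [E]
  simp only [LinearMap.comp_apply, TensorProduct.map_tmul, rctr_comul, LinearEquiv.coe_coe]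
  rw [← hf]
  simp

/-- L2 : `uem * f = f` for α-equivariant `f` -/
lemma uem_conv (f : H ⊗[k] H →ₗ[k] H)
    (hf : ∀ a b, f (A.α a ⊗ₜ[k] A.α b) = A.α (f (a ⊗ₜ b))) :
    convA A (uemA A) f = f := by
  refine TensorProduct.ext' fun x y => ?_
  rw [convA_tmul]
  have E : TensorProduct.lift ((A.mul ∘ₗ uemA A).compl₂ f) ∘ₗ
        (TensorProduct.tensorTensorTensorComm k H H H H).toLinearMap
      = A.α.toLinearMap ∘ₗ f ∘ₗ TensorProduct.map (lctr A) (lctr A) := by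
    ext a b c d
    simp [uemA, lctr, A.one_mul', tmul_smul, smul_tmul', mul_smul]
    simp [← smul_tmul', smul_smul, mul_comm]
  rw [E]
  simp only [LinearMap.comp_apply, TensorProduct.map_tmul, lctr_comul, LinearEquiv.coe_coe]
  rw [← hf]
  simp

end HomAux

namespace HomAux

variable {k H : Type*} [CommRing k] [AddCommGroup H] [Module k H] (A : MonHomHopf k H)

/-- L4 : `(S∘m) * m = uem` -/
lemma conv_Smm_mm : convA A (A.S ∘ₗ mmA A) (mmA A) = uemA A := by
  refine TensorProduct.ext' fun x y => ?_
  rw [convA_tmul]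
  have E : TensorProduct.lift ((A.mul ∘ₗ (A.S ∘ₗ mmA A)).compl₂ (mmA A)) ∘ₗ
        (TensorProduct.tensorTensorTensorComm k H H H H).toLinearMap
      = GLA A ∘ₗ (TensorProduct.map (mmA A) (mmA A) ∘ₗ
          (TensorProduct.tensorTensorTensorComm k H H H H).toLinearMap) := by
    ext a b c d
    simp [GLA, mmA]
  rw [E]
  simp only [LinearMap.comp_apply, LinearEquiv.coe_coe]
  have : TensorProduct.map (mmA A) (mmA A)
      ((TensorProduct.tensorTensorTensorComm k H H H H) (A.comul x ⊗ₜ A.comul y))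
      = A.comul (A.mul x y) := by
    rw [A.comul_mul, tmul2_apply]
    rfl
  rw [this]
  have := A.antipode_left (A.mul x y)
  simp only [GLA, LinearMap.comp_apply]
  rw [this, A.counit_mul, uemA_tmul]

/-- trilinear gadget `τ a b z = (a z) (α (S b))` -/
noncomputable def tauA : H →ₗ[k] H →ₗ[k] H →ₗ[k] H :=
  LinearMap.mk₂ k (fun a b => (A.mul.flip (A.α (A.S b))) ∘ₗ A.mul a)
    (by intro a a' b; ext z; simp)
    (by intro r a b; ext z; simp)
    (by intro a b b'; ext z; simp)
    (by intro r a b; ext z; simp)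

lemma tauA_apply (a b z : H) : tauA A a b z = A.mul (A.mul a z) (A.α (A.S b)) := rfl

/-- `K (c ⊗ d) = α⁻¹(c) S(α⁻¹ d)` -/
noncomputable def KA : H ⊗[k] H →ₗ[k] H :=
  GRA A ∘ₗ TensorProduct.map A.α.symm.toLinearMap A.α.symm.toLinearMap

/-- L3 : `m * ν = uem` -/
lemma conv_mm_nu : convA A (mmA A) (nuA A) = uemA A := by
  refine TensorProduct.ext' fun x y => ?_
  rw [convA_tmul]
  have E : TensorProduct.lift ((A.mul ∘ₗ mmA A).compl₂ (nuA A)) ∘ₗ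
        (TensorProduct.tensorTensorTensorComm k H H H H).toLinearMap
      = TensorProduct.lift (TensorProduct.lift (tauA A)) ∘ₗ
          TensorProduct.map LinearMap.id (KA A) := by
    ext a b c d
    simp [mmA, nuA, KA, GRA, tauA_apply]
    have h1 : A.mul a c = A.α (A.mul (A.α.symm a) (A.α.symm c)) := by
      rw [A.alpha_mul]; simp
    have h2 : A.S d = A.α (A.S (A.α.symm d)) := by rw [← A.S_alpha]; simp
    have h3 : A.mul (A.mul (A.α.symm a) (A.α.symm c)) (A.α (A.S (A.α.symm d)))
        = A.mul a (A.mul (A.α.symm c) (A.S (A.α.symm d))) := by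
      rw [← A.hom_assoc]; simp
    rw [h1, A.hom_assoc, h2, h3]
  rw [E]
  simp only [LinearMap.comp_apply, TensorProduct.map_tmul, LinearMap.id_apply]
  have hK : KA A (A.comul y) = A.counit y • A.one := by
    have h1 : TensorProduct.map A.α.symm.toLinearMap A.α.symm.toLinearMap (A.comul y)
        = A.comul (A.α.symm y) := (comul_ainv A y).symm
    simp only [KA, LinearMap.comp_apply]
    rw [h1]
    have := A.antipode_right (A.α.symm y)
    simp only [GRA, LinearMap.comp_apply]
    rw [this, counit_ainv]
  rw [hK, tmul_smul, map_smul]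
  have E2 : TensorProduct.lift (TensorProduct.lift (tauA A)) (A.comul x ⊗ₜ A.one)
      = A.α (GRA A (A.comul x)) := by
    have E3 : (TensorProduct.lift (tauA A)).flip A.one
        = A.α.toLinearMap ∘ₗ GRA A := by
      ext a b
      simp [tauA_apply, GRA, A.mul_one', ← A.alpha_mul]
    calc TensorProduct.lift (TensorProduct.lift (tauA A)) (A.comul x ⊗ₜ A.one)
        = (TensorProduct.lift (tauA A)).flip A.one (A.comul x) := by
          simp [LinearMap.flip_apply]
      _ = A.α (GRA A (A.comul x)) := by rw [E3]; rfl
  rw [E2]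
  have := A.antipode_right x
  simp only [GRA, LinearMap.comp_apply]
  rw [this]
  simp [uemA_tmul, A.alpha_one, smul_smul, mul_comm]

end HomAux

namespace HomAux

variable {k H : Type*} [CommRing k] [AddCommGroup H] [Module k H] (A : MonHomHopf k H)

/-- `p ⊗ (q ⊗ r) ↦ p (q r)` -/
noncomputable def mul3R : H ⊗[k] (H ⊗[k] H) →ₗ[k] H :=
  TensorProduct.lift (A.mul.compl₂ (TensorProduct.lift A.mul))

/-- `(p ⊗ q) ⊗ r ↦ (p q) r` -/
noncomputable def mul3L : (H ⊗[k] H) ⊗[k] H →ₗ[k] H :=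
  TensorProduct.lift (A.mul ∘ₗ TensorProduct.lift A.mul)

/-- triple convolution contraction, right-bracketed -/
noncomputable def Cmap (f g h : H ⊗[k] H →ₗ[k] H) :
    (H ⊗[k] (H ⊗[k] H)) ⊗[k] (H ⊗[k] (H ⊗[k] H)) →ₗ[k] H :=
  mul3R A ∘ₗ TensorProduct.map f (TensorProduct.map g h) ∘ₗ
    TensorProduct.map LinearMap.id
      (TensorProduct.tensorTensorTensorComm k H H H H).toLinearMap ∘ₗ
    (TensorProduct.tensorTensorTensorComm k H (H ⊗[k] H) H (H ⊗[k] H)).toLinearMap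

/-- triple convolution contraction, left-bracketed -/
noncomputable def Dmap (f g h : H ⊗[k] H →ₗ[k] H) :
    ((H ⊗[k] H) ⊗[k] H) ⊗[k] ((H ⊗[k] H) ⊗[k] H) →ₗ[k] H :=
  mul3L A ∘ₗ TensorProduct.map (TensorProduct.map f g) h ∘ₗ
    TensorProduct.map (TensorProduct.tensorTensorTensorComm k H H H H).toLinearMap
      LinearMap.id ∘ₗ
    (TensorProduct.tensorTensorTensorComm k (H ⊗[k] H) H (H ⊗[k] H) H).toLinearMap

noncomputable def cRm : H →ₗ[k] H ⊗[k] (H ⊗[k] H) :=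
  TensorProduct.map LinearMap.id A.comul ∘ₗ A.comul

noncomputable def cLm : H →ₗ[k] (H ⊗[k] H) ⊗[k] H :=
  TensorProduct.map A.comul LinearMap.id ∘ₗ A.comul

noncomputable def D2R : H →ₗ[k] H ⊗[k] (H ⊗[k] H) :=
  TensorProduct.map A.α.symm.toLinearMap A.comul ∘ₗ A.comul

noncomputable def D2L : H →ₗ[k] (H ⊗[k] H) ⊗[k] H :=
  TensorProduct.map A.comul A.α.symm.toLinearMap ∘ₗ A.comul

lemma coassoc_map (x : H) :
    (TensorProduct.assoc k H H H) (D2L A x) = D2R A x := A.hom_coassoc x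

lemma cRm_eq (x : H) :
    cRm A x = TensorProduct.map A.α.toLinearMap LinearMap.id (D2R A x) := by
  have E : TensorProduct.map A.α.toLinearMap LinearMap.id ∘ₗ
      TensorProduct.map A.α.symm.toLinearMap A.comul
      = TensorProduct.map LinearMap.id A.comul := by
    rw [← TensorProduct.map_comp, comp_self_symm, LinearMap.id_comp]
  simp only [cRm, D2R, LinearMap.comp_apply]
  rw [← LinearMap.comp_apply (TensorProduct.map A.α.toLinearMap LinearMap.id), E]

lemma cLm_eq (x : H) :
    cLm A x = TensorProduct.map LinearMap.id A.α.toLinearMap (D2L A x) := by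
  have E : TensorProduct.map LinearMap.id A.α.toLinearMap ∘ₗ
      TensorProduct.map A.comul A.α.symm.toLinearMap
      = TensorProduct.map A.comul LinearMap.id := by
    rw [← TensorProduct.map_comp, comp_self_symm, LinearMap.id_comp]
  simp only [cLm, D2L, LinearMap.comp_apply]
  rw [← LinearMap.comp_apply (TensorProduct.map LinearMap.id A.α.toLinearMap), E]

lemma Cmap_tmul (f g h : H ⊗[k] H →ₗ[k] H) (a c : H) (u v : H ⊗[k] H) :
    Cmap A f g h ((a ⊗ₜ u) ⊗ₜ (c ⊗ₜ v))
      = A.mul (f (a ⊗ₜ c))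
          ((TensorProduct.lift ((A.mul ∘ₗ g).compl₂ h) ∘ₗ
            (TensorProduct.tensorTensorTensorComm k H H H H).toLinearMap) (u ⊗ₜ v)) := by
  induction u using TensorProduct.induction_on with
  | zero => simp
  | tmul p q =>
    induction v using TensorProduct.induction_on with
    | zero => simp
    | tmul r s => simp [Cmap, mul3R]
    | add v₁ v₂ h1 h2 =>
      simp only [tmul_add, add_tmul, map_add, LinearMap.add_apply, h1, h2]
  | add u₁ u₂ h1 h2 =>
    simp only [tmul_add, add_tmul, map_add, LinearMap.add_apply, h1, h2]

lemma Dmap_tmul (f g h : H ⊗[k] H →ₗ[k] H) (b d : H) (u v : H ⊗[k] H) :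
    Dmap A f g h ((u ⊗ₜ b) ⊗ₜ (v ⊗ₜ d))
      = A.mul
          ((TensorProduct.lift ((A.mul ∘ₗ f).compl₂ g) ∘ₗ
            (TensorProduct.tensorTensorTensorComm k H H H H).toLinearMap) (u ⊗ₜ v))
          (h (b ⊗ₜ d)) := by
  induction u using TensorProduct.induction_on with
  | zero => simp
  | tmul p q =>
    induction v using TensorProduct.induction_on with
    | zero => simp
    | tmul r s => simp [Dmap, mul3L]
    | add v₁ v₂ h1 h2 =>
      simp only [tmul_add, add_tmul, map_add, LinearMap.add_apply, h1, h2]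
  | add u₁ u₂ h1 h2 =>
    simp only [tmul_add, add_tmul, map_add, LinearMap.add_apply, h1, h2]

lemma convA_right_expand (f g h : H ⊗[k] H →ₗ[k] H) (x y : H) :
    convA A f (convA A g h) (x ⊗ₜ y) = Cmap A f g h (cRm A x ⊗ₜ cRm A y) := by
  rw [convA_tmul]
  have E : TensorProduct.lift ((A.mul ∘ₗ f).compl₂ (convA A g h)) ∘ₗ
        (TensorProduct.tensorTensorTensorComm k H H H H).toLinearMap
      = Cmap A f g h ∘ₗ
          TensorProduct.map (TensorProduct.map LinearMap.id A.comul)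
            (TensorProduct.map LinearMap.id A.comul) := by
    ext a b c d
    simp only [LinearMap.coe_comp, Function.comp_apply, AlgebraTensorModule.curry_apply,
      TensorProduct.curry_apply, LinearMap.coe_restrictScalars, LinearEquiv.coe_coe,
      tensorTensorTensorComm_tmul, TensorProduct.lift.tmul, LinearMap.compl₂_apply,
      TensorProduct.map_tmul, LinearMap.id_apply]
    rw [Cmap_tmul, convA_tmul]
  rw [E]
  simp only [LinearMap.comp_apply, TensorProduct.map_tmul]
  rfl

lemma convA_left_expand (f g h : H ⊗[k] H →ₗ[k] H) (x y : H) :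
    convA A (convA A f g) h (x ⊗ₜ y) = Dmap A f g h (cLm A x ⊗ₜ cLm A y) := by
  rw [convA_tmul]
  have E : TensorProduct.lift ((A.mul ∘ₗ (convA A f g)).compl₂ h) ∘ₗ
        (TensorProduct.tensorTensorTensorComm k H H H H).toLinearMap
      = Dmap A f g h ∘ₗ
          TensorProduct.map (TensorProduct.map A.comul LinearMap.id)
            (TensorProduct.map A.comul LinearMap.id) := by
    ext a b c d
    simp only [LinearMap.coe_comp, Function.comp_apply, AlgebraTensorModule.curry_apply,
      TensorProduct.curry_apply, LinearMap.coe_restrictScalars, LinearEquiv.coe_coe,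
      tensorTensorTensorComm_tmul, TensorProduct.lift.tmul, LinearMap.compl₂_apply,
      TensorProduct.map_tmul, LinearMap.id_apply]
    rw [Dmap_tmul, convA_tmul]
  rw [E]
  simp only [LinearMap.comp_apply, TensorProduct.map_tmul]
  rfl

lemma CD_eq (f g h : H ⊗[k] H →ₗ[k] H)
    (hf : ∀ a b, f (A.α a ⊗ₜ[k] A.α b) = A.α (f (a ⊗ₜ b)))
    (hh : ∀ a b, h (A.α a ⊗ₜ[k] A.α b) = A.α (h (a ⊗ₜ b))) (x y : H) :
    Cmap A f g h (cRm A x ⊗ₜ cRm A y) = Dmap A f g h (cLm A x ⊗ₜ cLm A y) := by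
  rw [cRm_eq, cRm_eq, cLm_eq, cLm_eq, ← coassoc_map, ← coassoc_map]
  have E : Cmap A f g h ∘ₗ
        TensorProduct.map
          (TensorProduct.map A.α.toLinearMap LinearMap.id ∘ₗ
            (TensorProduct.assoc k H H H).toLinearMap)
          (TensorProduct.map A.α.toLinearMap LinearMap.id ∘ₗ
            (TensorProduct.assoc k H H H).toLinearMap)
      = Dmap A f g h ∘ₗ
          TensorProduct.map (TensorProduct.map LinearMap.id A.α.toLinearMap)
            (TensorProduct.map LinearMap.id A.α.toLinearMap) := by
    ext a b c a' b' c'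
    simp only [LinearMap.coe_comp, Function.comp_apply, AlgebraTensorModule.curry_apply,
      TensorProduct.curry_apply, LinearMap.coe_restrictScalars, LinearEquiv.coe_coe,
      TensorProduct.map_tmul, LinearMap.id_apply, assoc_tmul]
    rw [Cmap_tmul, Dmap_tmul]
    simp only [LinearMap.comp_apply, LinearEquiv.coe_coe, tensorTensorTensorComm_tmul,
      TensorProduct.lift.tmul, LinearMap.compl₂_apply]
    rw [hf, hh, A.hom_assoc]
  have happ := DFunLike.congr_fun E (D2L A x ⊗ₜ[k] D2L A y)
  simp only [LinearMap.comp_apply, TensorProduct.map_tmul, LinearEquiv.coe_coe] at happ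
  exact happ

/-- L5 : Hom-associativity of convolution for equivariant outer maps -/
lemma convA_assoc (f g h : H ⊗[k] H →ₗ[k] H)
    (hf : ∀ a b, f (A.α a ⊗ₜ[k] A.α b) = A.α (f (a ⊗ₜ b)))
    (hh : ∀ a b, h (A.α a ⊗ₜ[k] A.α b) = A.α (h (a ⊗ₜ b))) :
    convA A f (convA A g h) = convA A (convA A f g) h := by
  refine TensorProduct.ext' fun x y => ?_
  rw [convA_right_expand, convA_left_expand, CD_eq A f g h hf hh]

end HomAux

namespace HomAux

variable {k H : Type*} [CommRing k] [AddCommGroup H] [Module k H] (A : MonHomHopf k H)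

lemma Smm_equiv : ∀ a b : H,
    (A.S ∘ₗ mmA A) (A.α a ⊗ₜ[k] A.α b) = A.α ((A.S ∘ₗ mmA A) (a ⊗ₜ b)) := by
  intro a b
  simp [mmA, ← A.alpha_mul, A.S_alpha]

lemma nu_equiv : ∀ a b : H,
    nuA A (A.α a ⊗ₜ[k] A.α b) = A.α (nuA A (a ⊗ₜ b)) := by
  intro a b
  simp [nuA, A.S_alpha, ← A.alpha_mul]

/-- antimultiplicativity of the antipode -/
lemma S_mul (x y : H) : A.S (A.mul x y) = A.mul (A.S y) (A.S x) := by
  have h1 : A.S ∘ₗ mmA A = nuA A := by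
    calc A.S ∘ₗ mmA A
        = convA A (A.S ∘ₗ mmA A) (uemA A) := (conv_uem A _ (Smm_equiv A)).symm
      _ = convA A (A.S ∘ₗ mmA A) (convA A (mmA A) (nuA A)) := by rw [conv_mm_nu]
      _ = convA A (convA A (A.S ∘ₗ mmA A) (mmA A)) (nuA A) :=
          convA_assoc A _ _ _ (Smm_equiv A) (nu_equiv A)
      _ = convA A (uemA A) (nuA A) := by rw [conv_Smm_mm]
      _ = nuA A := uem_conv A _ (nu_equiv A)
  have := DFunLike.congr_fun h1 (x ⊗ₜ[k] y)
  simpa [mmA, nuA] using this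

end HomAux

namespace HomAux

variable {k H : Type*} [CommRing k] [AddCommGroup H] [Module k H] {A : MonHomHopf k H}
variable {M : Type*} [AddCommGroup M] [Module k M] (B : LeftCovBimod A M)

lemma muinv_lact (h : H) (m : M) :
    B.μ.symm (B.lact h m) = B.lact (A.α.symm h) (B.μ.symm m) := by
  apply B.μ.injective
  rw [B.mu_lact]
  simp

lemma muinv_ract (m : M) (h : H) :
    B.μ.symm (B.ract m h) = B.ract (B.μ.symm m) (A.α.symm h) := by
  apply B.μ.injective
  rw [B.mu_ract]
  simp

lemma mu_comp_symm_self : B.μ.symm.toLinearMap ∘ₗ B.μ.toLinearMap = LinearMap.id := by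
  ext x; simp

lemma mu_comp_self_symm : B.μ.toLinearMap ∘ₗ B.μ.symm.toLinearMap = LinearMap.id := by
  ext x; simp

lemma rho_muinv (m : M) :
    B.rho (B.μ.symm m)
      = TensorProduct.map A.α.symm.toLinearMap B.μ.symm.toLinearMap (B.rho m) := by
  have h1 := B.rho_mu (B.μ.symm m)
  rw [B.μ.apply_symm_apply] at h1
  rw [h1, ← LinearMap.comp_apply, ← TensorProduct.map_comp, comp_symm_self,
    mu_comp_symm_self, TensorProduct.map_id, LinearMap.id_apply]

lemma map_am_cancel (z : H ⊗[k] M) :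
    TensorProduct.map A.α.symm.toLinearMap B.μ.symm.toLinearMap
      (TensorProduct.map A.α.toLinearMap B.μ.toLinearMap z) = z := by
  rw [← LinearMap.comp_apply, ← TensorProduct.map_comp, comp_symm_self,
    mu_comp_symm_self, TensorProduct.map_id, LinearMap.id_apply]

lemma map_am_inj : Function.Injective
    (TensorProduct.map A.α.toLinearMap B.μ.toLinearMap) := by
  intro u v huv
  have := congrArg (TensorProduct.map A.α.symm.toLinearMap B.μ.symm.toLinearMap) huv
  rwa [map_am_cancel, map_am_cancel] at this

/-- `ρ(h·m) = h₁ m₋₁ ⊗ h₂ · m₀` -/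
lemma rho_lact (h : H) (m : M) :
    B.rho (B.lact h m) = tmul2 A.mul B.lact (A.comul h) (B.rho m) := by
  apply map_am_inj B
  have hcov := B.rho_cov h A.one m
  rw [A.alpha_one, B.ract_one] at hcov
  rw [A.comul_one] at hcov
  have e1 : ∀ v : H ⊗[k] M, tmul2 A.mul B.ract v (A.one ⊗ₜ A.one)
      = TensorProduct.map A.α.toLinearMap B.μ.toLinearMap v := by
    intro v
    induction v using TensorProduct.induction_on with
    | zero => simp
    | tmul a b => simp [tmul2_tmul, A.mul_one', B.ract_one]
    | add u₁ u₂ h1 h2 => simp only [map_add, LinearMap.add_apply, h1, h2]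
  rw [e1] at hcov
  have e2 : ∀ (u : H ⊗[k] H) (v : H ⊗[k] M),
      tmul2 A.mul B.lact (TensorProduct.map A.α.toLinearMap A.α.toLinearMap u)
          (TensorProduct.map A.α.toLinearMap B.μ.toLinearMap v)
        = TensorProduct.map A.α.toLinearMap B.μ.toLinearMap
            (tmul2 A.mul B.lact u v) := by
    intro u v
    induction u using TensorProduct.induction_on with
    | zero => simp
    | tmul a b =>
      induction v using TensorProduct.induction_on with
      | zero => simp
      | tmul c d => simp [tmul2_tmul, ← A.alpha_mul, ← B.mu_lact]
      | add v₁ v₂ h1 h2 => simp only [map_add, h1, h2, LinearMap.map_add]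
    | add u₁ u₂ h1 h2 =>
      simp only [map_add, h1, h2, LinearMap.map_add, LinearMap.add_apply]
  rw [A.comul_alpha, e2] at hcov
  rw [← B.rho_mu]
  exact hcov

/-- `ρ(m·h) = m₋₁ h₁ ⊗ m₀ · h₂` -/
lemma rho_ract (m : M) (h : H) :
    B.rho (B.ract m h) = tmul2 A.mul B.ract (B.rho m) (A.comul h) := by
  have hcov := B.rho_cov A.one (A.α.symm h) (B.μ.symm m)
  rw [B.lact_one, B.μ.apply_symm_apply, A.α.apply_symm_apply, A.alpha_one,
    A.comul_one] at hcov
  have e1 : ∀ v : H ⊗[k] M, tmul2 A.mul B.lact (A.one ⊗ₜ A.one) v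
      = TensorProduct.map A.α.toLinearMap B.μ.toLinearMap v := by
    intro v
    induction v using TensorProduct.induction_on with
    | zero => simp
    | tmul a b => simp [tmul2_tmul, A.one_mul', B.lact_one]
    | add u₁ u₂ h1 h2 => simp only [map_add, h1, h2]
  rw [e1, rho_muinv, comul_ainv] at hcov
  have e2 : ∀ (v : H ⊗[k] M) (u : H ⊗[k] H),
      TensorProduct.map A.α.toLinearMap B.μ.toLinearMap
        (tmul2 A.mul B.ract
          (TensorProduct.map A.α.symm.toLinearMap B.μ.symm.toLinearMap v)
          (TensorProduct.map A.α.symm.toLinearMap A.α.symm.toLinearMap u))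
      = tmul2 A.mul B.ract v u := by
    intro v u
    induction v using TensorProduct.induction_on with
    | zero => simp
    | tmul a b =>
      induction u using TensorProduct.induction_on with
      | zero => simp
      | tmul c d =>
        simp only [TensorProduct.map_tmul, tmul2_tmul, LinearEquiv.coe_coe]
        have h1 : A.α (A.mul (A.α.symm a) (A.α.symm c)) = A.mul a c := by
          rw [A.alpha_mul]; simp
        have h2 : B.μ (B.ract (B.μ.symm b) (A.α.symm d)) = B.ract b d := by
          rw [B.mu_ract]; simp
        rw [h1, h2]
      | add u₁ u₂ h1 h2 => simp only [map_add, h1, h2, LinearMap.map_add]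
    | add v₁ v₂ h1 h2 =>
      simp only [map_add, h1, h2, LinearMap.map_add, LinearMap.add_apply]
  rw [e2] at hcov
  exact hcov

end HomAux

namespace HomAux

variable {k H : Type*} [CommRing k] [AddCommGroup H] [Module k H] {A : MonHomHopf k H}
variable {M : Type*} [AddCommGroup M] [Module k M] (B : LeftCovBimod A M)

lemma ainv_one : A.α.symm A.one = A.one := by
  have := congrArg A.α.symm A.alpha_one
  simpa using this.symm

/-- `σ₁ z c d = α(S c) · (z · d)` (left action twice) -/
noncomputable def sigma1 : H →ₗ[k] H →ₗ[k] M →ₗ[k] M :=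
  LinearMap.mk₂ k (fun z c => B.lact (A.α (A.S c)) ∘ₗ B.lact z)
    (by intros; ext d; simp)
    (by intros; ext d; simp)
    (by intros; ext d; simp)
    (by intros; ext d; simp)

noncomputable def Theta1 : H →ₗ[k] (H ⊗[k] M →ₗ[k] M) :=
  (TensorProduct.lift.equiv (RingHom.id k) H M M).toLinearMap ∘ₗ sigma1 B

lemma Theta1_tmul (z c : H) (d : M) :
    Theta1 B z (c ⊗ₜ d) = B.lact (A.α (A.S c)) (B.lact z d) := by
  simp [Theta1, sigma1]

lemma key1 (u : H ⊗[k] H) (v : H ⊗[k] M) :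
    TensorProduct.lift (B.lact ∘ₗ A.S) (tmul2 A.mul B.lact u v)
      = Theta1 B ((A.α.symm.toLinearMap ∘ₗ GLA A) u) v := by
  induction u using TensorProduct.induction_on with
  | zero => simp
  | tmul a b =>
    induction v using TensorProduct.induction_on with
    | zero => simp
    | tmul c d =>
      rw [tmul2_tmul]
      simp only [TensorProduct.lift.tmul, LinearMap.comp_apply, GLA,
        TensorProduct.map_tmul, LinearMap.id_apply, Theta1_tmul]
      rw [S_mul A a c]
      have e1 : B.lact (A.mul (A.S c) (A.S a)) (B.lact b d)
          = B.lact (A.α (A.S c)) (B.lact (A.S a) (B.μ.symm (B.lact b d))) := by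
        rw [B.lact_assoc, B.μ.apply_symm_apply]
      have e2 : B.lact (A.S a) (B.lact (A.α.symm b) (B.μ.symm d))
          = B.lact (A.α.symm (A.mul (A.S a) b)) d := by
        have h3 := B.lact_assoc (A.α.symm (A.S a)) (A.α.symm b) (B.μ.symm d)
        simp only [A.α.apply_symm_apply, B.μ.apply_symm_apply] at h3
        rw [← ainv_mul] at h3
        exact h3
      rw [e1, muinv_lact, e2]
      rfl
    | add v₁ v₂ h1 h2 => simp only [map_add, LinearMap.map_add, h1, h2]
  | add u₁ u₂ h1 h2 =>
    simp only [map_add, LinearMap.map_add, LinearMap.add_apply, h1, h2]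

lemma PL_lact (h : H) (m : M) :
    B.PL (B.lact h m) = A.counit h • B.μ (B.PL m) := by
  have h0 : B.PL (B.lact h m)
      = TensorProduct.lift (B.lact ∘ₗ A.S)
          (tmul2 A.mul B.lact (A.comul h) (B.rho m)) := by
    simp [LeftCovBimod.PL, rho_lact]
  rw [h0, key1]
  have hg : (A.α.symm.toLinearMap ∘ₗ GLA A) (A.comul h) = A.counit h • A.one := by
    simp only [LinearMap.comp_apply, GLA]
    rw [A.antipode_left]
    simp [ainv_one (A := A)]
  rw [hg, map_smul, LinearMap.smul_apply]
  congr 1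
  have hone : Theta1 B A.one
      = B.μ.toLinearMap ∘ₗ TensorProduct.lift (B.lact ∘ₗ A.S) := by
    apply TensorProduct.ext'
    intro c d
    simp only [Theta1_tmul, LinearMap.comp_apply, TensorProduct.lift.tmul,
      LinearEquiv.coe_coe]
    rw [B.lact_one, ← B.mu_lact]
  rw [hone]
  simp [LeftCovBimod.PL]

/-- `σ₂ z c d = (S(c) · z) · α(d)` -/
noncomputable def sigma2 : M →ₗ[k] H →ₗ[k] H →ₗ[k] M :=
  LinearMap.mk₂ k (fun z c => B.ract (B.lact (A.S c) z) ∘ₗ A.α.toLinearMap)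
    (by intros; ext d; simp)
    (by intros; ext d; simp)
    (by intros; ext d; simp)
    (by intros; ext d; simp)

noncomputable def Theta2 : M →ₗ[k] (H ⊗[k] H →ₗ[k] M) :=
  (TensorProduct.lift.equiv (RingHom.id k) H H M).toLinearMap ∘ₗ sigma2 B

lemma Theta2_tmul (z : M) (c d : H) :
    Theta2 B z (c ⊗ₜ d) = B.ract (B.lact (A.S c) z) (A.α d) := by
  simp [Theta2, sigma2]

lemma key2 (v : H ⊗[k] M) (u : H ⊗[k] H) :
    TensorProduct.lift (B.lact ∘ₗ A.S) (tmul2 A.mul B.ract v u)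
      = Theta2 B ((B.μ.symm.toLinearMap ∘ₗ TensorProduct.lift (B.lact ∘ₗ A.S)) v) u := by
  induction v using TensorProduct.induction_on with
  | zero => simp
  | tmul a b =>
    induction u using TensorProduct.induction_on with
    | zero => simp
    | tmul c d =>
      rw [tmul2_tmul]
      simp only [TensorProduct.lift.tmul, LinearMap.comp_apply, Theta2_tmul,
        LinearEquiv.coe_coe]
      rw [S_mul A a c]
      have e1 : B.lact (A.mul (A.S c) (A.S a)) (B.ract b d)
          = B.lact (A.α (A.S c)) (B.lact (A.S a) (B.μ.symm (B.ract b d))) := by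
        rw [B.lact_assoc, B.μ.apply_symm_apply]
      have e2 : B.lact (A.S a) (B.ract (B.μ.symm b) (A.α.symm d))
          = B.ract (B.lact (A.α.symm (A.S a)) (B.μ.symm b)) d := by
        have h3 := B.bimod (A.α.symm (A.S a)) (B.μ.symm b) (A.α.symm d)
        simp only [A.α.apply_symm_apply] at h3
        exact h3.symm
      have e3 : B.lact (A.α (A.S c))
            (B.ract (B.lact (A.α.symm (A.S a)) (B.μ.symm b)) d)
          = B.ract (B.lact (A.S c) (B.lact (A.α.symm (A.S a)) (B.μ.symm b))) (A.α d) :=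
        (B.bimod (A.S c) (B.lact (A.α.symm (A.S a)) (B.μ.symm b)) d).symm
      rw [e1, muinv_ract, e2, e3, muinv_lact]
    | add u₁ u₂ h1 h2 => simp only [map_add, LinearMap.map_add, h1, h2]
  | add v₁ v₂ h1 h2 =>
    simp only [map_add, LinearMap.map_add, LinearMap.add_apply, h1, h2]

lemma PL_ract (m : M) (h : H) :
    B.PL (B.ract m h) = B.adRM (B.PL m) h := by
  have h0 : B.PL (B.ract m h)
      = TensorProduct.lift (B.lact ∘ₗ A.S)
          (tmul2 A.mul B.ract (B.rho m) (A.comul h)) := by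
    simp [LeftCovBimod.PL, rho_ract]
  rw [h0, key2]
  have hq : (B.μ.symm.toLinearMap ∘ₗ TensorProduct.lift (B.lact ∘ₗ A.S)) (B.rho m)
      = B.μ.symm (B.PL m) := by
    simp [LeftCovBimod.PL]
  rw [hq]
  have hT : Theta2 B (B.μ.symm (B.PL m))
      = TensorProduct.lift
          ((B.ract.comp ((B.lact.flip (B.μ.symm (B.PL m))).comp A.S)).compl₂
            A.α.toLinearMap) := by
    apply TensorProduct.ext'
    intro c d
    simp [Theta2_tmul, LinearMap.flip_apply]
  rw [hT]
  simp [LeftCovBimod.adRM]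

end HomAux


/-- `P_L(h·m) = ε(h) μ(P_L(m))` and
`P_L(m·h) = (S(h₁) · μ⁻¹(P_L(m))) · α(h₂)` (the right adjoint Hom-action of `h` on `P_L(m)`). -/
theorem PL_equivariance {k H : Type*} [CommRing k] [AddCommGroup H] [Module k H]
    (A : MonHomHopf k H) {M : Type*} [AddCommGroup M] [Module k M]
    (B : LeftCovBimod A M) :
    (∀ h m, B.PL (B.lact h m) = A.counit h • B.μ (B.PL m)) ∧
    (∀ m h, B.PL (B.ract m h) = B.adRM (B.PL m) h) := by
  exact ⟨fun h m => HomAux.PL_lact B h m, fun m h => HomAux.PL_ract B m h⟩
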